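/- Let n ≥ 3 and a, c, t ∈ ℂ with c ≠ 0 and a ≠ 1. For 1 ≤ i ≤ n−1 let A_i = L_i([[a, (1−a)/c],[c, 0]]) and B_i = L_i([[1 − (1−a)(1−t), (1−a)(1−t)/c],[c(1−t), t]]) be n×n complex matrices. Then the vector v ∈ ℂⁿ with entries v_j = c^j (1 ≤ j ≤ n) satisfies A_i v = v and B_i v = v for all 1 ≤ i ≤ n−1; consequently the one-dimensional subspace spanned by v is a nontrivial proper subspace of ℂⁿ invariant under all A_i and B_i, so the family {A_i, B_i : 1 ≤ i ≤ n−1} is reducible. -/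

import Mathlib

open Matrix

/-- `localBlock n k M` is the `n × n` matrix agreeing with the identity matrix except that
its `2 × 2` block in (0-based) rows and columns `k, k + 1` equals `M`.  For `1 ≤ i ≤ n - 1`
(1-based indexing), the matrix `L_i(M)` of the paper is `localBlock n (i - 1) M`. -/
def localBlock (n k : ℕ) (M : Matrix (Fin 2) (Fin 2) ℂ) : Matrix (Fin n) (Fin n) ℂ :=
  fun j l =>
    if j.val = k ∧ l.val = k then M 0 0
    else if j.val = k ∧ l.val = k + 1 then M 0 1
    else if j.val = k + 1 ∧ l.val = k then M 1 0
    else if j.val = k + 1 ∧ l.val = k + 1 then M 1 1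
    else if j = l then 1 else 0

lemma localBlock_fixes (n k : ℕ) (hk : k + 1 < n) (M : Matrix (Fin 2) (Fin 2) ℂ) (c : ℂ)
    (h1 : M 0 0 + M 0 1 * c = 1) (h2 : M 1 0 + M 1 1 * c = c)
    (v : Fin n → ℂ) (hv : ∀ j : Fin n, v j = c ^ (j.val + 1)) :
    (localBlock n k M).mulVec v = v := by
  have hkn : k < n := Nat.lt_of_succ_lt hk
  set jk : Fin n := ⟨k, hkn⟩ with hjkdef
  set jk1 : Fin n := ⟨k + 1, hk⟩ with hjk1def
  have hne : jk ≠ jk1 := by simp [hjkdef, hjk1def, Fin.ext_iff]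
  have Ekk : localBlock n k M jk jk = M 0 0 := by
    simp [localBlock, hjkdef, hjk1def]
  have Ekk1 : localBlock n k M jk jk1 = M 0 1 := by
    simp [localBlock, hjkdef, hjk1def]
  have E1k : localBlock n k M jk1 jk = M 1 0 := by
    simp [localBlock, hjkdef, hjk1def]
  have E1k1 : localBlock n k M jk1 jk1 = M 1 1 := by
    simp [localBlock, hjkdef, hjk1def]
  have Eoff : ∀ j l : Fin n, j.val = k ∨ j.val = k + 1 → l ≠ jk → l ≠ jk1 →
      localBlock n k M j l = 0 := by
    intro j l hj hl hl1
    have hlk : ¬ l.val = k := fun h => hl (Fin.ext h)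
    have hlk1 : ¬ l.val = k + 1 := fun h => hl1 (Fin.ext h)
    have hjl : ¬ j = l := by
      rintro rfl; rcases hj with h | h
      · exact hlk h
      · exact hlk1 h
    simp [localBlock, hlk, hlk1, hjl]
  funext j
  rw [mulVec, dotProduct]
  by_cases hjk : j.val = k
  · have hj : j = jk := Fin.ext hjk
    subst hj
    have key : ∀ l : Fin n, localBlock n k M jk l * v l
        = (if l = jk then M 0 0 * v jk else 0) + (if l = jk1 then M 0 1 * v jk1 else 0) := by
      intro l
      by_cases hl : l = jk
      · subst hl; rw [if_pos rfl, if_neg hne, Ekk]; ring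
      · by_cases hl1 : l = jk1
        · subst hl1; rw [if_neg hl, if_pos rfl, Ekk1]; ring
        · rw [if_neg hl, if_neg hl1, Eoff jk l (Or.inl rfl) hl hl1]; ring
    rw [Finset.sum_congr rfl fun l _ => key l, Finset.sum_add_distrib,
      Finset.sum_ite_eq' _ jk, Finset.sum_ite_eq' _ jk1]
    simp only [Finset.mem_univ, if_true, hv]
    show M 0 0 * c ^ (k + 1) + M 0 1 * c ^ (k + 1 + 1) = c ^ (k + 1)
    rw [show M 0 0 * c ^ (k + 1) + M 0 1 * c ^ (k + 1 + 1)
        = (M 0 0 + M 0 1 * c) * c ^ (k + 1) by ring, h1, one_mul]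
  · by_cases hjk1 : j.val = k + 1
    · have hj : j = jk1 := Fin.ext hjk1
      subst hj
      have key : ∀ l : Fin n, localBlock n k M jk1 l * v l
          = (if l = jk then M 1 0 * v jk else 0) + (if l = jk1 then M 1 1 * v jk1 else 0) := by
        intro l
        by_cases hl : l = jk
        · subst hl; rw [if_pos rfl, if_neg hne, E1k]; ring
        · by_cases hl1 : l = jk1
          · subst hl1; rw [if_neg hl, if_pos rfl, E1k1]; ring
          · rw [if_neg hl, if_neg hl1, Eoff jk1 l (Or.inr rfl) hl hl1]; ring
      rw [Finset.sum_congr rfl fun l _ => key l, Finset.sum_add_distrib,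
        Finset.sum_ite_eq' _ jk, Finset.sum_ite_eq' _ jk1]
      simp only [Finset.mem_univ, if_true, hv]
      show M 1 0 * c ^ (k + 1) + M 1 1 * c ^ (k + 1 + 1) = c ^ (k + 1 + 1)
      rw [show M 1 0 * c ^ (k + 1) + M 1 1 * c ^ (k + 1 + 1)
          = (M 1 0 + M 1 1 * c) * c ^ (k + 1) by ring, h2]
      ring
    · have key : ∀ l : Fin n, localBlock n k M j l * v l = if j = l then v l else 0 := by
        intro l
        simp only [localBlock, hjk, hjk1, false_and, if_false]
        split_ifs <;> simp
      rw [Finset.sum_congr rfl fun l _ => key l, Finset.sum_ite_eq _ j]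
      simp

/-- Theorem 5.5 for `ρ₁`: the homogeneous local representation `ρ₁` of `SBₙ` is reducible;
the vector with entries `v_j = c^j` is fixed by all `ρ₁(σ_i)` and `ρ₁(τ_i)`, and spans a
nontrivial proper invariant subspace. -/
theorem rho1_local_reducible (n : ℕ) (hn : 3 ≤ n) (a c t : ℂ)
    (hc : c ≠ 0) (ha : a ≠ 1)
    (A B : ℕ → Matrix (Fin n) (Fin n) ℂ)
    (hA : ∀ i, A i = localBlock n (i - 1) !![a, (1 - a) / c; c, 0])
    (hB : ∀ i, B i = localBlock n (i - 1)
        !![1 - (1 - a) * (1 - t), (1 - a) * (1 - t) / c; c * (1 - t), t])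
    (v : Fin n → ℂ) (hv : ∀ j : Fin n, v j = c ^ (j.val + 1)) :
    (∀ i : ℕ, 1 ≤ i → i ≤ n - 1 → (A i).mulVec v = v ∧ (B i).mulVec v = v) ∧
    Submodule.span ℂ {v} ≠ ⊥ ∧ Submodule.span ℂ {v} ≠ ⊤ ∧
    (∀ i : ℕ, 1 ≤ i → i ≤ n - 1 → ∀ u ∈ Submodule.span ℂ {v},
        (A i).mulVec u ∈ Submodule.span ℂ {v} ∧ (B i).mulVec u ∈ Submodule.span ℂ {v}) := by
  have hfix : ∀ i : ℕ, 1 ≤ i → i ≤ n - 1 → (A i).mulVec v = v ∧ (B i).mulVec v = v := by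
    intro i hi1 hi2
    have hk : (i - 1) + 1 < n := by omega
    constructor
    · rw [hA i]
      refine localBlock_fixes n (i - 1) hk _ c ?_ ?_ v hv
      · show a + (1 - a) / c * c = 1
        field_simp
        ring
      · show c + 0 * c = c
        ring
    · rw [hB i]
      refine localBlock_fixes n (i - 1) hk _ c ?_ ?_ v hv
      · show 1 - (1 - a) * (1 - t) + (1 - a) * (1 - t) / c * c = 1
        field_simp
        ring
      · show c * (1 - t) + t * c = c
        ring
  have h0 : (0 : ℕ) < n := by omega
  have h1 : (1 : ℕ) < n := by omega
  have hv0 : v ⟨0, h0⟩ = c := by rw [hv]; simp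
  have hvne : v ≠ 0 := by
    intro h
    apply hc
    have := congrFun h ⟨0, h0⟩
    rw [hv0] at this; simpa using this
  refine ⟨hfix, ?_, ?_, ?_⟩
  · rw [Ne, Submodule.span_singleton_eq_bot]; exact hvne
  · intro htop
    have hw : Pi.single (⟨0, h0⟩ : Fin n) (1 : ℂ) ∈ Submodule.span ℂ {v} := htop ▸ Submodule.mem_top
    rw [Submodule.mem_span_singleton] at hw
    obtain ⟨r, hr⟩ := hw
    have e0 := congrFun hr ⟨0, h0⟩
    have e1 := congrFun hr ⟨1, h1⟩
    simp [hv, Pi.single_apply, Fin.ext_iff] at e0 e1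
    -- e0 : r * c = 1, e1 : r * c ^ 2 = 0
    have hr0 : r = 0 := e1.resolve_right hc
    rw [hr0, zero_mul] at e0
    exact one_ne_zero e0.symm
  · intro i hi1 hi2 u hu
    rw [Submodule.mem_span_singleton] at hu
    obtain ⟨r, hr⟩ := hu
    obtain ⟨hAv, hBv⟩ := hfix i hi1 hi2
    constructor
    · rw [← hr, mulVec_smul, hAv]
      exact Submodule.smul_mem _ r (Submodule.mem_span_singleton_self v)
    · rw [← hr, mulVec_smul, hBv]
      exact Submodule.smul_mem _ r (Submodule.mem_span_singleton_self v)
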